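/- In a Noetherian local ring (R,m) of prime characteristic p, for every proper ideal I the special part of tight closure is contained in the special part of integral closure: I^{*sp} ⊆ I^{-sp}. -/

import Mathlib

/-- The integral closure `J̄` of an ideal `J`: elements `x` satisfying an equation
`x ^ k + a 1 * x ^ (k-1) + ⋯ + a k = 0` with `a i ∈ J ^ i`. -/
def intCl {R : Type*} [CommRing R] (J : Ideal R) : Set R :=
  {x | ∃ k : ℕ, 0 < k ∧ ∃ a : ℕ → R, (∀ i, 1 ≤ i → i ≤ k → a i ∈ J ^ i) ∧
    x ^ k + ∑ i ∈ Finset.Icc 1 k, a i * x ^ (k - i) = 0}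

/-- The special part of the integral closure of an ideal `I` of a local ring `(R,m)`:
`I^{-sp} = {x | x ^ n ∈ (m * I ^ n)‾ for some n ≥ 1}`. -/
def spIntCl {R : Type*} [CommRing R] [IsLocalRing R] (I : Ideal R) : Set R :=
  {x | ∃ n : ℕ, 1 ≤ n ∧ x ^ n ∈ intCl (IsLocalRing.maximalIdeal R * I ^ n)}
/-- The `q`-th Frobenius power `I^{[q]}` of an ideal: the ideal generated by `q`-th powers
of elements of `I`. -/
def idealFrobPow {R : Type*} [CommRing R] (I : Ideal R) (q : ℕ) : Ideal R :=
  Ideal.span ((· ^ q) '' (I : Set R))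

/-- The tight closure `I^*` of an ideal in a ring of characteristic `p`: `x ∈ I^*` iff
there is `c` outside every minimal prime with `c * x ^ q ∈ I^{[q]}` for all large `q = p^e`. -/
def tightCl {R : Type*} [CommRing R] (p : ℕ) (I : Ideal R) : Set R :=
  {x | ∃ c : R, (∀ P ∈ minimalPrimes R, c ∉ P) ∧
    ∃ e₀ : ℕ, ∀ e ≥ e₀, c * x ^ p ^ e ∈ idealFrobPow I (p ^ e)}

/-- The special part of the tight closure of an ideal `I` of a local ring `(R,m)`:
`I^{*sp} = {x | x ^ q ∈ (m * I^{[q]})^* for some q = p^e}`. -/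
def spTightCl {R : Type*} [CommRing R] [IsLocalRing R] (p : ℕ) (I : Ideal R) : Set R :=
  {x | ∃ e : ℕ,
    x ^ p ^ e ∈ tightCl p (IsLocalRing.maximalIdeal R * idealFrobPow I (p ^ e))}

open Polynomial

section Aux
variable {R : Type*} [CommRing R]

/-- `f` is a witness polynomial for integral dependence on `J`:
monic with `i`-th coefficient in `J ^ (deg - i)`. -/
def IsIntPoly (J : Ideal R) (f : R[X]) : Prop :=
  f.Monic ∧ ∀ i, f.coeff i ∈ J ^ (f.natDegree - i)

theorem IsIntPoly.one (J : Ideal R) : IsIntPoly J (1 : R[X]) := by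
  refine ⟨monic_one, fun i => ?_⟩
  simp only [natDegree_one, Nat.zero_sub, pow_zero, Ideal.one_eq_top]
  exact Submodule.mem_top

theorem IsIntPoly.X [Nontrivial R] (J : Ideal R) : IsIntPoly J (Polynomial.X : R[X]) := by
  refine ⟨monic_X, fun i => ?_⟩
  rcases i with _ | _ | i
  · simpa [natDegree_X] using (J ^ 1).zero_mem
  · simp [natDegree_X, Ideal.one_eq_top]
  · simpa [natDegree_X, coeff_X] using (J ^ 0).zero_mem

theorem IsIntPoly.mul [Nontrivial R] {J : Ideal R} {f g : R[X]}
    (hf : IsIntPoly J f) (hg : IsIntPoly J g) : IsIntPoly J (f * g) := by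
  obtain ⟨hfm, hfc⟩ := hf
  obtain ⟨hgm, hgc⟩ := hg
  refine ⟨hfm.mul hgm, fun i => ?_⟩
  rw [hfm.natDegree_mul hgm, coeff_mul]
  refine Ideal.sum_mem _ ?_
  rintro ⟨a, b⟩ hab
  rw [Finset.HasAntidiagonal.mem_antidiagonal] at hab
  have h1 : f.coeff a * g.coeff b ∈ J ^ (f.natDegree - a) * J ^ (g.natDegree - b) :=
    Ideal.mul_mem_mul (hfc a) (hgc b)
  rw [← pow_add] at h1
  exact Ideal.pow_le_pow_right (by omega) h1

theorem IsIntPoly.pow [Nontrivial R] {J : Ideal R} {f : R[X]}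
    (hf : IsIntPoly J f) (m : ℕ) : IsIntPoly J (f ^ m) := by
  induction m with
  | zero => simpa using IsIntPoly.one J
  | succ n ih => rw [pow_succ]; exact ih.mul hf

/-- Constructor polynomial: `X^d + ∑_{i<d} a i X^i`. -/
noncomputable def mkIntPoly (d : ℕ) (a : ℕ → R) : R[X] :=
  Polynomial.X ^ d + ∑ i ∈ Finset.range d, C (a i) * Polynomial.X ^ i

theorem mkIntPoly_monic (d : ℕ) (hd : 0 < d) (a : ℕ → R) : (mkIntPoly d a).Monic := by
  refine monic_X_pow_add ?_
  refine lt_of_le_of_lt (degree_sum_le _ _) ?_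
  rw [Finset.sup_lt_iff (by exact_mod_cast WithBot.bot_lt_coe d)]
  intro i hi
  exact lt_of_le_of_lt (degree_C_mul_X_pow_le _ _)
    (by exact_mod_cast Finset.mem_range.mp hi)

theorem mkIntPoly_natDegree (d : ℕ) (hd : 0 < d) (a : ℕ → R) [Nontrivial R] :
    (mkIntPoly d a).natDegree = d := by
  have h1 : (∑ i ∈ Finset.range d, C (a i) * Polynomial.X ^ i).degree
      < (Polynomial.X ^ d : R[X]).degree := by
    rw [degree_X_pow]
    refine lt_of_le_of_lt (degree_sum_le _ _) ?_
    rw [Finset.sup_lt_iff (by exact_mod_cast WithBot.bot_lt_coe d)]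
    intro i hi
    exact lt_of_le_of_lt (degree_C_mul_X_pow_le _ _)
      (by exact_mod_cast Finset.mem_range.mp hi)
  have h2 := degree_add_eq_left_of_degree_lt h1
  rw [degree_X_pow] at h2
  exact natDegree_eq_of_degree_eq_some h2

theorem mkIntPoly_coeff_lt (d : ℕ) (a : ℕ → R) {j : ℕ} (hj : j < d) :
    (mkIntPoly d a).coeff j = a j := by
  rw [mkIntPoly, coeff_add, coeff_X_pow, if_neg hj.ne, finset_sum_coeff]
  simp only [coeff_C_mul, coeff_X_pow]
  rw [Finset.sum_eq_single j (fun b _ hb => by simp [Ne.symm hb]) (fun h => absurd (Finset.mem_range.mpr hj) h)]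
  simp

theorem mkIntPoly_eval (d : ℕ) (a : ℕ → R) (x : R) :
    (mkIntPoly d a).eval x = x ^ d + ∑ i ∈ Finset.range d, a i * x ^ i := by
  simp [mkIntPoly, eval_finset_sum]

theorem isIntPoly_mkIntPoly {J : Ideal R} [Nontrivial R] (d : ℕ) (hd : 0 < d) (a : ℕ → R)
    (ha : ∀ i < d, a i ∈ J ^ (d - i)) : IsIntPoly J (mkIntPoly d a) := by
  refine ⟨mkIntPoly_monic d hd a, fun i => ?_⟩
  rw [mkIntPoly_natDegree d hd a]
  by_cases hi : i < d
  · rw [mkIntPoly_coeff_lt d a hi]; exact ha i hi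
  · have : d - i = 0 := by omega
    rw [this, pow_zero, Ideal.one_eq_top]
    exact Submodule.mem_top

private theorem sum_range_eq_sum_Icc {M : Type*} [AddCommMonoid M] (k : ℕ) (F : ℕ → M) :
    ∑ j ∈ Finset.range k, F j = ∑ i ∈ Finset.Icc 1 k, F (k - i) := by
  refine Finset.sum_nbij' (fun j => k - j) (fun i => k - i) ?_ ?_ ?_ ?_ ?_
  · intro a ha; rw [Finset.mem_range] at ha; rw [Finset.mem_Icc]; omega
  · intro a ha; rw [Finset.mem_Icc] at ha; rw [Finset.mem_range]; omega
  · intro a ha; rw [Finset.mem_range] at ha; omega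
  · intro a ha; rw [Finset.mem_Icc] at ha; omega
  · intro a ha; rw [Finset.mem_range] at ha
    exact congrArg F (by omega)

theorem mem_intCl_iff [Nontrivial R] {J : Ideal R} {x : R} :
    x ∈ intCl J ↔ ∃ f : R[X], IsIntPoly J f ∧ 0 < f.natDegree ∧ f.eval x = 0 := by
  constructor
  · rintro ⟨k, hk, a, ha, heq⟩
    refine ⟨mkIntPoly k (fun j => a (k - j)), ?_, ?_, ?_⟩
    · refine isIntPoly_mkIntPoly k hk _ ?_
      intro i hi
      exact ha (k - i) (by omega) (by omega)
    · rw [mkIntPoly_natDegree k hk]; exact hk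
    · rw [mkIntPoly_eval]
      have : ∑ j ∈ Finset.range k, a (k - j) * x ^ j
          = ∑ i ∈ Finset.Icc 1 k, a i * x ^ (k - i) := by
        rw [sum_range_eq_sum_Icc k (fun j => a (k - j) * x ^ j)]
        refine Finset.sum_congr rfl (fun i hi => ?_)
        rw [Finset.mem_Icc] at hi
        congr 2 <;> omega
      rw [this]; exact heq
  · rintro ⟨f, ⟨hm, hcoeff⟩, hdeg, heval⟩
    set k := f.natDegree with hk
    refine ⟨k, hdeg, fun i => f.coeff (k - i), fun i hi1 hik => ?_, ?_⟩
    · have := hcoeff (k - i)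
      rwa [show k - (k - i) = i by omega] at this
    · have h1 : ∑ i ∈ Finset.Icc 1 k, f.coeff (k - i) * x ^ (k - i)
          = ∑ j ∈ Finset.range k, f.coeff j * x ^ j := by
        rw [sum_range_eq_sum_Icc k (fun j => f.coeff j * x ^ j)]
      rw [h1, ← heval]
      conv_rhs => rw [hm.as_sum]
      simp [eval_finset_sum, hk]

end Aux

section Domain
variable {R : Type*} [CommRing R] [IsNoetherianRing R] [IsDomain R]

theorem mem_intCl_of_mul_pow_mem (J : Ideal R) (c x : R) (hc : c ≠ 0)
    (q : ℕ → ℕ) (hq : StrictMono q) (hq0 : 0 < q 0)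
    (h : ∀ i, c * x ^ q i ∈ J ^ q i) : x ∈ intCl J := by
  classical
  set A := reesAlgebra J
  -- the elements c * x^{q i} * t^{q i} of the Rees algebra
  have hmem : ∀ i, (Polynomial.monomial (q i) (c * x ^ q i) : R[X]) ∈ A :=
    fun i => reesAlgebra.monomial_mem.mpr (h i)
  set e : ℕ → A := fun i => ⟨Polynomial.monomial (q i) (c * x ^ q i), hmem i⟩ with he
  -- an ascending chain of ideals of the Rees algebra
  set N : ℕ →o Ideal A :=
    ⟨fun n => Ideal.span (Set.range (fun i : Fin (n + 1) => e i.val)), by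
      intro n m hnm
      apply Ideal.span_mono
      rintro _ ⟨i, rfl⟩
      exact ⟨⟨i.val, by omega⟩, rfl⟩⟩ with hN
  obtain ⟨n₀, hn₀⟩ := monotone_stabilizes_iff_noetherian.mpr
    (inferInstance : IsNoetherian A A) N
  have hkey : e (n₀ + 1) ∈ N n₀ := by
    rw [hn₀ (n₀ + 1) (by omega)]
    exact Ideal.subset_span ⟨⟨n₀ + 1, by omega⟩, rfl⟩
  rw [hN] at hkey
  change e (n₀ + 1) ∈ Ideal.span (Set.range (fun i : Fin (n₀ + 1) => e i.val)) at hkey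
  rw [← Ideal.submodule_span_eq, Submodule.mem_span_range_iff_exists_fun] at hkey
  obtain ⟨g, hg⟩ := hkey
  set Q := q (n₀ + 1) with hQ
  have hqi : ∀ i : Fin (n₀ + 1), q i.val < Q := fun i => hq (by omega)
  -- project the equation to R[X] and take the coefficient of X^Q
  have hval : (∑ i : Fin (n₀ + 1), (g i : R[X]) * Polynomial.monomial (q i.val) (c * x ^ q i.val))
      = Polynomial.monomial Q (c * x ^ Q) := by
    have := congrArg (Subtype.val) hg
    simpa [he, smul_eq_mul] using this
  have hco := congrArg (fun f => Polynomial.coeff f Q) hval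
  simp only [Polynomial.finset_sum_coeff] at hco
  have hco2 : ∀ i : Fin (n₀ + 1),
      ((g i : R[X]) * Polynomial.monomial (q i.val) (c * x ^ q i.val)).coeff Q
        = (g i : R[X]).coeff (Q - q i.val) * (c * x ^ q i.val) := by
    intro i
    have h2 : Q - q i.val + q i.val = Q := by have := hqi i; omega
    conv_lhs => rw [← h2, Polynomial.coeff_mul_monomial]
  rw [Finset.sum_congr rfl (fun i _ => hco2 i)] at hco
  rw [Polynomial.coeff_monomial_same] at hco
  set b : Fin (n₀ + 1) → R := fun i => (g i : R[X]).coeff (Q - q i.val) with hb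
  have hbmem : ∀ i : Fin (n₀ + 1), b i ∈ J ^ (Q - q i.val) := fun i => (g i).2 _
  -- cancel c
  have hx : x ^ Q = ∑ i : Fin (n₀ + 1), b i * x ^ q i.val := by
    apply mul_left_cancel₀ hc
    rw [← hco, Finset.mul_sum]
    exact Finset.sum_congr rfl (fun i _ => by ring)
  -- assemble the integral equation
  set a₀ : ℕ → R := fun j =>
    ∑ i ∈ Finset.univ.filter (fun i : Fin (n₀ + 1) => q i.val = j), b i with ha₀
  have hpos : ∑ j ∈ Finset.range Q, a₀ j * x ^ j = ∑ i : Fin (n₀ + 1), b i * x ^ q i.val := by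
    rw [← Finset.sum_fiberwise_of_maps_to
      (fun i _ => Finset.mem_range.mpr (hqi i)) (fun i => b i * x ^ q i.val)]
    refine Finset.sum_congr rfl (fun j hj => ?_)
    rw [ha₀]
    dsimp only
    rw [Finset.sum_mul]
    refine Finset.sum_congr rfl (fun i hi => ?_)
    rw [Finset.mem_filter] at hi
    rw [hi.2]
  have hQpos : 0 < Q := lt_of_le_of_lt (Nat.zero_le _) (lt_of_le_of_lt hq0 (hq (by omega)))
  refine mem_intCl_iff.mpr ⟨mkIntPoly Q (fun j => -(a₀ j)), ?_, ?_, ?_⟩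
  · refine isIntPoly_mkIntPoly Q hQpos _ ?_
    intro j hj
    refine neg_mem (Ideal.sum_mem _ ?_)
    intro i hi
    rw [Finset.mem_filter] at hi
    rw [← hi.2]
    exact hbmem i
  · rw [mkIntPoly_natDegree Q hQpos]; exact hQpos
  · rw [mkIntPoly_eval]
    have h3 : ∑ j ∈ Finset.range Q, -(a₀ j) * x ^ j
        = -∑ j ∈ Finset.range Q, a₀ j * x ^ j := by
      rw [← Finset.sum_neg_distrib]
      exact Finset.sum_congr rfl (fun j _ => by ring)
    rw [h3, hpos, ← hx]
    ring

end Domain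

section General
variable {R : Type*} [CommRing R] [IsNoetherianRing R] [Nontrivial R]

theorem mem_intCl_of_mul_prime_pow_mem {p : ℕ} (hp : 2 ≤ p) {K : Ideal R} {c x : R}
    (hc : ∀ P ∈ minimalPrimes R, c ∉ P) {e₀ : ℕ}
    (h : ∀ e ≥ e₀, c * x ^ p ^ e ∈ K ^ p ^ e) : x ∈ intCl K := by
  classical
  -- for every minimal prime, an integral-dependence witness polynomial whose value lies in it
  have key : ∀ P : Ideal R, ∃ f : R[X],
      IsIntPoly K f ∧ 0 < f.natDegree ∧ (P ∈ minimalPrimes R → f.eval x ∈ P) := by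
    intro P
    by_cases hP : P ∈ minimalPrimes R
    · haveI : P.IsPrime := hP.1.1
      set π := Ideal.Quotient.mk P with hπ
      haveI : IsNoetherianRing (R ⧸ P) :=
        isNoetherianRing_of_surjective R (R ⧸ P) π Ideal.Quotient.mk_surjective
      have hcbar : π c ≠ 0 := by
        rw [Ne, Ideal.Quotient.eq_zero_iff_mem]
        exact hc P hP
      have hmem : ∀ i : ℕ, π c * π x ^ p ^ (e₀ + i) ∈ (K.map π) ^ p ^ (e₀ + i) := by
        intro i
        rw [← Ideal.map_pow, ← map_pow π, ← map_mul π]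
        exact Ideal.mem_map_of_mem π (h (e₀ + i) (by omega))
      have hqmono : StrictMono (fun i : ℕ => p ^ (e₀ + i)) := by
        intro i j hij
        exact Nat.pow_lt_pow_right (by omega) (by omega)
      have hint := mem_intCl_of_mul_pow_mem (K.map π) (π c) (π x) hcbar _ hqmono
        (Nat.pow_pos (by omega)) hmem
      rw [mem_intCl_iff] at hint
      obtain ⟨fbar, ⟨hfm, hfc⟩, hfd, hfe⟩ := hint
      set d := fbar.natDegree with hd
      -- lift the coefficients
      have hlift : ∀ i : ℕ, ∃ b : R, b ∈ K ^ (d - i) ∧ (i < d → π b = fbar.coeff i) := by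
        intro i
        by_cases hi : i < d
        · have h1 : fbar.coeff i ∈ Ideal.map π (K ^ (d - i)) := by
            rw [Ideal.map_pow]; exact hfc i
          obtain ⟨b, hb, hbe⟩ :=
            Ideal.mem_map_iff_of_surjective π Ideal.Quotient.mk_surjective |>.mp h1
          exact ⟨b, hb, fun _ => hbe⟩
        · refine ⟨1, ?_, fun hlt => absurd hlt hi⟩
          rw [show d - i = 0 by omega, pow_zero, Ideal.one_eq_top]
          exact Submodule.mem_top
      choose b hb1 hb2 using hlift
      refine ⟨mkIntPoly d b, isIntPoly_mkIntPoly d hfd b (fun i hi => hb1 i), ?_, fun _ => ?_⟩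
      · rw [mkIntPoly_natDegree d hfd]; exact hfd
      · rw [← Ideal.Quotient.eq_zero_iff_mem, mkIntPoly_eval]
        rw [map_add, map_pow, map_sum]
        simp only [map_mul, map_pow]
        have : ∀ i ∈ Finset.range d, π (b i) * π x ^ i = fbar.coeff i * π x ^ i := by
          intro i hi
          rw [hb2 i (Finset.mem_range.mp hi)]
        rw [Finset.sum_congr rfl this]
        rw [← hfe]
        conv_rhs => rw [hfm.as_sum]
        simp [eval_finset_sum, hd]
        rfl
    · exact ⟨Polynomial.X, IsIntPoly.X K, by simp, fun hP' => absurd hP' hP⟩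
  choose F hF1 hF2 hF3 using key
  -- the product over the (finitely many) minimal primes
  set S := (minimalPrimes.finite_of_isNoetherianRing R).toFinset with hS
  set G : R[X] := ∏ P ∈ S, F P with hG
  have hGint : IsIntPoly K G :=
    Finset.prod_induction F (IsIntPoly K) (fun f g hf hg => hf.mul hg)
      (IsIntPoly.one K) (fun P _ => hF1 P)
  have hGmonic : G.Monic := hGint.1
  -- S is nonempty
  obtain ⟨M, hM⟩ := Ideal.exists_maximal R
  obtain ⟨P₀, hP₀, _⟩ := Ideal.exists_minimalPrimes_le (bot_le : (⊥ : Ideal R) ≤ M)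
  have hP₀' : P₀ ∈ minimalPrimes R := hP₀
  have hS₀ : P₀ ∈ S := (minimalPrimes.finite_of_isNoetherianRing R).mem_toFinset.mpr hP₀'
  have hGdeg : 0 < G.natDegree := by
    rw [hG, Polynomial.natDegree_prod_of_monic _ _ (fun P _ => (hF1 P).1)]
    exact Finset.sum_pos' (fun P _ => Nat.zero_le _) ⟨P₀, hS₀, hF2 P₀⟩
  -- the value of G at x is in every prime, hence nilpotent
  have hz : G.eval x ∈ nilradical R := by
    rw [nilradical_eq_sInf, Submodule.mem_sInf]
    intro P hP
    haveI : Ideal.IsPrime P := hP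
    obtain ⟨Q, hQ, hQP⟩ := Ideal.exists_minimalPrimes_le (bot_le : (⊥ : Ideal R) ≤ P)
    have hQ' : Q ∈ minimalPrimes R := hQ
    have hQS : Q ∈ S := (minimalPrimes.finite_of_isNoetherianRing R).mem_toFinset.mpr hQ'
    refine hQP ?_
    rw [hG, Polynomial.eval_prod, ← Finset.mul_prod_erase S _ hQS]
    exact Ideal.mul_mem_right _ _ (hF3 Q hQ')
  obtain ⟨m, hm⟩ := hz
  have hm0 : m ≠ 0 := by
    rintro rfl
    rw [pow_zero] at hm
    exact one_ne_zero hm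
  refine mem_intCl_iff.mpr ⟨G ^ m, hGint.pow m, ?_, ?_⟩
  · rw [hGmonic.natDegree_pow]
    exact Nat.mul_pos (by omega) hGdeg
  · rw [Polynomial.eval_pow]
    exact hm

end General

/-- In a Noetherian local ring `(R,m)` of prime characteristic `p`,
for every proper ideal `I`, `I^{*sp} ⊆ I^{-sp}`. -/
theorem spTightCl_subset_spIntCl
    {R : Type*} [CommRing R] [IsNoetherianRing R] [IsLocalRing R]
    (p : ℕ) [Fact p.Prime] [CharP R p]
    (I : Ideal R) (hI : I ≠ ⊤) :
    spTightCl p I ⊆ spIntCl I := by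
  intro x hx
  obtain ⟨e, c, hc, e₀, hce⟩ := hx
  have hp2 : 2 ≤ p := (Fact.out : p.Prime).two_le
  refine ⟨p ^ e, Nat.one_le_pow _ _ (by omega), ?_⟩
  have hfrob : ∀ (J : Ideal R) (n : ℕ), idealFrobPow J n ≤ J ^ n := by
    intro J n
    rw [idealFrobPow, Ideal.span_le]
    rintro _ ⟨a, ha, rfl⟩
    exact Ideal.pow_mem_pow ha n
  have hJK : IsLocalRing.maximalIdeal R * idealFrobPow I (p ^ e)
      ≤ IsLocalRing.maximalIdeal R * I ^ (p ^ e) :=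
    Ideal.mul_mono_right (hfrob I (p ^ e))
  refine mem_intCl_of_mul_prime_pow_mem hp2 hc (e₀ := e₀) ?_
  intro f hf
  exact Ideal.pow_right_mono hJK _ (hfrob _ _ (hce f hf))
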